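/- Correctness of Bellman–Ford after |V| − 1 iterations (Theorem 2.3, first part). Suppose every cycle reachable from s has nonnegative total weight. Then for every vertex v, the Bellman–Ford iterate satisfies d (|V|−1) v = the infimum of the weights of all walks from s to v (with value ⊤ exactly when v is not reachable from s); that is, d (|V|−1) v equals the true shortest-path distance d*(v). -/

import Mathlib

/-- `IsWalk E p t a b` : `p 0 = a`, `p t = b`, and each consecutive pair is an edge. -/
def IsWalk {V : Type*} (E : V → V → Prop) (p : ℕ → V) (t : ℕ) (a b : V) : Prop :=
  p 0 = a ∧ p t = b ∧ ∀ i < t, E (p i) (p (i + 1))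

/-- Weight of a walk with `t` edges. -/
def walkWeight {V : Type*} (w : V → V → ℝ) (p : ℕ → V) (t : ℕ) : ℝ :=
  ∑ i ∈ Finset.range t, w (p i) (p (i + 1))

open Classical in
/-- Bellman–Ford iterates from source `s`. -/
noncomputable def BF {V : Type*} (E : V → V → Prop) (w : V → V → ℝ) (s : V) :
    ℕ → V → EReal
  | 0, v => if v = s then 0 else ⊤
  | (t + 1), v =>
      min (BF E w s t v) (⨅ u : {u : V // E u v}, (BF E w s t u.1 + (w u.1 v : EReal)))

section Aux

variable {V : Type*} {E : V → V → Prop} {w : V → V → ℝ} {s : V}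

lemma BF_mono {t t' : ℕ} (h : t ≤ t') (v : V) : BF E w s t' v ≤ BF E w s t v := by
  induction t' with
  | zero => rw [Nat.le_zero.mp h]
  | succ n ih =>
    rcases Nat.lt_or_ge t (n + 1) with h' | h'
    · exact le_trans (min_le_left _ _) (ih (Nat.lt_succ_iff.mp h'))
    · rw [le_antisymm h h']

/-- Upper bound: `BF l v` is at most the weight of any walk of length `l`. -/
lemma BF_le_walk : ∀ (l : ℕ) (p : ℕ → V) (v : V), IsWalk E p l s v →
    BF E w s l v ≤ (walkWeight w p l : EReal) := by
  intro l
  induction l with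
  | zero =>
    intro p v h
    have hv : v = s := h.1 ▸ h.2.1.symm
    simp [BF, hv, walkWeight]
  | succ l ih =>
    intro p v h
    have hedge : E (p l) v := by
      have := h.2.2 l (Nat.lt_succ_self l)
      rwa [h.2.1] at this
    have hpre : IsWalk E p l s (p l) :=
      ⟨h.1, rfl, fun i hi => h.2.2 i (hi.trans (Nat.lt_succ_self l))⟩
    have h1 : BF E w s (l + 1) v ≤ BF E w s l (p l) + (w (p l) v : EReal) :=
      le_trans (min_le_right _ _) (iInf_le _ (⟨p l, hedge⟩ : {u : V // E u v}))
    have h2 : BF E w s l (p l) + (w (p l) v : EReal) ≤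
        (walkWeight w p l : EReal) + (w (p l) v : EReal) :=
      add_le_add_left (ih p (p l) hpre) _
    have h3 : walkWeight w p (l + 1) = walkWeight w p l + w (p l) (p (l + 1)) :=
      Finset.sum_range_succ _ _
    rw [h3, h.2.1, EReal.coe_add]
    exact h1.trans h2

/-- Attainment: each BF value is `⊤` or the weight of an actual walk of length `≤ t`. -/
lemma BF_attained [Fintype V] : ∀ (t : ℕ) (v : V), BF E w s t v = ⊤ ∨
    ∃ (p : ℕ → V) (l : ℕ), l ≤ t ∧ IsWalk E p l s v ∧
      BF E w s t v = (walkWeight w p l : EReal) := by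
  intro t
  induction t with
  | zero =>
    intro v
    by_cases hv : v = s
    · right
      refine ⟨fun _ => s, 0, le_refl 0, ⟨rfl, hv.symm, fun i hi => absurd hi (Nat.not_lt_zero i)⟩, ?_⟩
      simp [BF, hv, walkWeight]
    · left; simp [BF, hv]
  | succ t ih =>
    intro v
    have hBF : BF E w s (t + 1) v =
        min (BF E w s t v) (⨅ u : {u : V // E u v}, (BF E w s t u.1 + (w u.1 v : EReal))) := rfl
    rcases min_cases (BF E w s t v)
        (⨅ u : {u : V // E u v}, (BF E w s t u.1 + (w u.1 v : EReal))) with ⟨hmin, _⟩ | ⟨hmin, _⟩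
    · rw [hBF, hmin]
      rcases ih v with h | ⟨p, l, hl, hw', heq⟩
      · left; exact h
      · right; exact ⟨p, l, hl.trans (Nat.le_succ t), hw', heq⟩
    · rw [hBF, hmin]
      by_cases hne : Nonempty {u : V // E u v}
      · -- the infimum is attained
        obtain ⟨⟨u, hu⟩, hmin'⟩ := Finite.exists_min
          (fun u : {u : V // E u v} => BF E w s t u.1 + (w u.1 v : EReal))
        have hinf : (⨅ u : {u : V // E u v}, (BF E w s t u.1 + (w u.1 v : EReal))) =
            BF E w s t u + (w u v : EReal) :=
          le_antisymm (iInf_le _ (⟨u, hu⟩ : {u : V // E u v})) (le_iInf hmin')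
        rw [hinf]
        rcases ih u with h | ⟨q, l, hl, hw', heq⟩
        · left; rw [h, EReal.top_add_coe]
        · right
          set p₂ : ℕ → V := fun k => if k ≤ l then q k else v with hp₂
          have ha : ∀ k, k ≤ l → p₂ k = q k := fun k hk => by simp [hp₂, hk]
          have hb : p₂ (l + 1) = v := by simp [hp₂]
          refine ⟨p₂, l + 1, by omega, ⟨?_, hb, ?_⟩, ?_⟩
          · rw [ha 0 (Nat.zero_le l), hw'.1]
          · intro k hk
            rcases Nat.lt_or_ge k l with h' | h'
            · rw [ha k (le_of_lt h'), ha (k + 1) h']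
              exact hw'.2.2 k h'
            · have hkl : k = l := by omega
              rw [hkl, ha l (le_refl l), hb, hw'.2.1]
              exact hu
          · rw [heq, ← EReal.coe_add]
            congr 1
            unfold walkWeight
            rw [Finset.sum_range_succ, ha l (le_refl l), hb, hw'.2.1]
            congr 1
            apply Finset.sum_congr rfl
            intro k hk
            simp only [Finset.mem_range] at hk
            rw [ha k (by omega), ha (k + 1) (by omega)]
      · left
        haveI : IsEmpty {u : V // E u v} := not_nonempty_iff.mp hne
        exact iInf_of_empty _

/-- Shortening: any walk can be replaced by one of length `≤ |V| - 1` of no larger weight. -/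
lemma walk_shorten [Fintype V] [Nonempty V]
    (hnoneg : ∀ (c : V) (p : ℕ → V) (l : ℕ), 1 ≤ l → IsWalk E p l c c →
      (∃ (q : ℕ → V) (lq : ℕ), IsWalk E q lq s c) → 0 ≤ walkWeight w p l) :
    ∀ (l : ℕ) (p : ℕ → V) (v : V), IsWalk E p l s v →
      ∃ (p' : ℕ → V) (l' : ℕ), l' ≤ Fintype.card V - 1 ∧ IsWalk E p' l' s v ∧
        walkWeight w p' l' ≤ walkWeight w p l := by
  intro l
  induction l using Nat.strong_induction_on with
  | _ l ih =>
  intro p v hw'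
  by_cases hl : l ≤ Fintype.card V - 1
  · exact ⟨p, l, hl, hw', le_refl _⟩
  push_neg at hl
  have hcardpos : 1 ≤ Fintype.card V := Fintype.card_pos
  have hcard : Fintype.card V < Fintype.card (Fin (l + 1)) := by
    simp only [Fintype.card_fin]; omega
  obtain ⟨a, b, hab, heqab⟩ :=
    Fintype.exists_ne_map_eq_of_card_lt (fun i : Fin (l + 1) => p i) hcard
  -- normalize to i < j
  obtain ⟨i, j, hij, hjl, heq⟩ : ∃ i j : ℕ, i < j ∧ j ≤ l ∧ p i = p j := by
    rcases lt_or_gt_of_ne hab with h | h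
    · exact ⟨a, b, h, Nat.lt_succ_iff.mp b.isLt, heqab⟩
    · exact ⟨b, a, h, Nat.lt_succ_iff.mp a.isLt, heqab.symm⟩
  set d := j - i with hd
  have hd1 : 1 ≤ d := by omega
  set l' := l - d with hl'
  set p' : ℕ → V := fun k => if k ≤ i then p k else p (k + d) with hp'
  have hil' : i ≤ l' := by omega
  have hpa : ∀ k, k ≤ i → p' k = p k := fun k hk => by simp [hp', hk]
  have hpb : ∀ k, i < k → p' k = p (k + d) := fun k hk => by
    simp [hp', Nat.not_le.mpr hk]
  -- p' is a walk from s to v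
  have hwalk' : IsWalk E p' l' s v := by
    refine ⟨by rw [hpa 0 (Nat.zero_le i), hw'.1], ?_, ?_⟩
    · by_cases h : l' ≤ i
      · have h1 : l' = i := le_antisymm h hil'
        have h2 : l = j := by omega
        rw [hpa l' h, h1, heq, ← h2, hw'.2.1]
      · push_neg at h
        rw [hpb l' h]
        have : l' + d = l := by omega
        rw [this, hw'.2.1]
    · intro k hk
      rcases Nat.lt_or_ge k i with h1 | h1
      · rw [hpa k (le_of_lt h1), hpa (k + 1) h1]
        exact hw'.2.2 k (by omega)
      · rcases Nat.eq_or_lt_of_le h1 with h2 | h2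
        · -- k = i
          rw [hpa k (le_of_eq h2.symm), hpb (k + 1) (by omega)]
          rw [h2] at heq
          rw [heq]
          have h3 : k + 1 + d = j + 1 := by omega
          rw [h3]
          exact hw'.2.2 j (by omega)
        · rw [hpb k h2, hpb (k + 1) (by omega)]
          have h3 : k + 1 + d = k + d + 1 := by omega
          rw [h3]
          exact hw'.2.2 (k + d) (by omega)
  -- the removed cycle
  set q : ℕ → V := fun k => p (i + k) with hq
  have hcyc : IsWalk E q d (p i) (p i) := by
    refine ⟨by simp [hq], ?_, ?_⟩
    · simp only [hq]
      have : i + d = j := by omega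
      rw [this, heq]
    · intro k hk
      simp only [hq]
      have : i + (k + 1) = i + k + 1 := by omega
      rw [this]
      exact hw'.2.2 (i + k) (by omega)
  have hreach : ∃ (r : ℕ → V) (lr : ℕ), IsWalk E r lr s (p i) :=
    ⟨p, i, hw'.1, rfl, fun k hk => hw'.2.2 k (by omega)⟩
  have hcycw : 0 ≤ walkWeight w q d := hnoneg (p i) q d hd1 hcyc hreach
  -- weight decomposition
  have hdecomp : walkWeight w p l = walkWeight w p' l' + walkWeight w q d := by
    unfold walkWeight
    set f : ℕ → ℝ := fun k => w (p k) (p (k + 1)) with hf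
    have e1 : ∑ k ∈ Finset.range l, f k =
        ((∑ k ∈ Finset.range i, f k) + ∑ k ∈ Finset.range d, f (i + k))
          + ∑ k ∈ Finset.range (l - j), f (j + k) := by
      conv_lhs => rw [show l = i + (d + (l - j)) from by omega]
      rw [Finset.sum_range_add, Finset.sum_range_add, ← add_assoc]
      congr 1
      apply Finset.sum_congr rfl
      intro k _
      have : i + (d + k) = j + k := by omega
      rw [this]
    have e2 : ∑ k ∈ Finset.range l', w (p' k) (p' (k + 1)) =
        (∑ k ∈ Finset.range i, f k) + ∑ k ∈ Finset.range (l - j), f (j + k) := by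
      conv_lhs => rw [show l' = i + (l - j) from by omega]
      rw [Finset.sum_range_add]
      congr 1
      · apply Finset.sum_congr rfl
        intro k hk
        simp only [Finset.mem_range] at hk
        rw [hpa k (by omega), hpa (k + 1) (by omega)]
      · apply Finset.sum_congr rfl
        intro k hk
        simp only [Finset.mem_range] at hk
        rcases Nat.eq_zero_or_pos k with h0 | h0
        · subst h0
          rw [hpa (i + 0) (by omega), hpb (i + 0 + 1) (by omega)]
          simp only [Nat.add_zero]
          rw [heq]
          have h3 : i + 1 + d = j + 1 := by omega
          rw [h3]
        · rw [hpb (i + k) (by omega), hpb (i + k + 1) (by omega)]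
          have h3 : i + k + d = j + k := by omega
          have h4 : i + k + 1 + d = j + k + 1 := by omega
          rw [h3, h4]
    have e3 : ∑ k ∈ Finset.range d, w (q k) (q (k + 1)) =
        ∑ k ∈ Finset.range d, f (i + k) := by
      apply Finset.sum_congr rfl
      intro k _
      simp only [hq, hf]
      have : i + k + 1 = i + (k + 1) := by omega
      rw [this]
    rw [e1, e2, e3]
    ring
  obtain ⟨p'', l'', hle, hw'', hww⟩ := ih l' (by omega) p' v hwalk'
  exact ⟨p'', l'', hle, hw'', hww.trans (by rw [hdecomp]; linarith)⟩

end Aux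

/-- Correctness of Bellman–Ford after `|V| - 1` iterations: if every cycle
reachable from `s` has nonnegative total weight, then `d (|V|-1) v` equals the
infimum of the weights of all walks from `s` to `v`, with value `⊤` exactly
when `v` is not reachable from `s`. -/
theorem bellmanFord_correct
    {V : Type*} [Fintype V] [Nonempty V]
    (E : V → V → Prop) (w : V → V → ℝ) (s : V)
    (hnoneg : ∀ (c : V) (p : ℕ → V) (l : ℕ), 1 ≤ l → IsWalk E p l c c →
      (∃ (q : ℕ → V) (lq : ℕ), IsWalk E q lq s c) → 0 ≤ walkWeight w p l) :
    (∀ v : V,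
      BF E w s (Fintype.card V - 1) v =
        ⨅ (p : ℕ → V) (l : ℕ) (_ : IsWalk E p l s v), (walkWeight w p l : EReal)) ∧
    (∀ v : V,
      BF E w s (Fintype.card V - 1) v = ⊤ ↔
        ¬ ∃ (p : ℕ → V) (l : ℕ), IsWalk E p l s v) := by
  have hmain : ∀ v : V,
      BF E w s (Fintype.card V - 1) v =
        ⨅ (p : ℕ → V) (l : ℕ) (_ : IsWalk E p l s v), (walkWeight w p l : EReal) := by
    intro v
    apply le_antisymm
    · refine le_iInf fun p => le_iInf fun l => le_iInf fun hwalk => ?_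
      obtain ⟨p', l', hle, hw', hww⟩ := walk_shorten hnoneg l p v hwalk
      calc BF E w s (Fintype.card V - 1) v ≤ BF E w s l' v := BF_mono hle v
        _ ≤ (walkWeight w p' l' : EReal) := BF_le_walk l' p' v hw'
        _ ≤ (walkWeight w p l : EReal) := by exact_mod_cast hww
    · rcases BF_attained (E := E) (w := w) (s := s) (Fintype.card V - 1) v with
        h | ⟨p, l, _, hw', heq⟩
      · rw [h]; exact le_top
      · rw [heq]
        exact le_trans (iInf_le _ p) (le_trans (iInf_le _ l) (iInf_le _ hw'))
  refine ⟨hmain, fun v => ?_⟩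
  constructor
  · rintro htop ⟨p, l, hwalk⟩
    have h1 : (⨅ (p : ℕ → V) (l : ℕ) (_ : IsWalk E p l s v), (walkWeight w p l : EReal)) ≤
        (walkWeight w p l : EReal) :=
      le_trans (iInf_le _ p) (le_trans (iInf_le _ l) (iInf_le _ hwalk))
    rw [← hmain v, htop] at h1
    exact not_le_of_gt (EReal.coe_lt_top (walkWeight w p l)) h1
  · intro hne
    rw [hmain v, iInf_eq_top]
    intro p
    rw [iInf_eq_top]
    intro l
    rw [iInf_eq_top]
    intro hwalk
    exact absurd ⟨p, l, hwalk⟩ hne
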